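/- For every stable marriage instance there exists a stable matching μ_M (the man-optimal stable matching) such that for every stable matching μ and every man m, either μ_M(m) = μ(m) or μ_M(m) ≻_m μ(m); i.e., every man weakly prefers his partner in μ_M to his partner in any stable matching. -/

import Mathlib

open Finset

set_option linter.unusedSectionVars false

/-- A stable marriage instance: finite sets `M` of men and `W` of women of equal
positive cardinality, with strict total preference orders for each agent. -/
structure SMInstance (M W : Type) [Fintype M] [Fintype W] where
  card_eq : Fintype.card M = Fintype.card W
  card_pos : 1 ≤ Fintype.card M
  prefM : M → W → W → Prop
  prefW : W → M → M → Prop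
  prefM_sto : ∀ m, IsStrictTotalOrder W (prefM m)
  prefW_sto : ∀ w, IsStrictTotalOrder M (prefW w)

/-- A pair `(m, w)` blocks the matching `μ` if `w ≻_m μ(m)` and `m ≻_w μ⁻¹(w)`. -/
def SMInstance.Blocks {M W : Type} [Fintype M] [Fintype W]
    (I : SMInstance M W) (μ : M ≃ W) (m : M) (w : W) : Prop :=
  I.prefM m w (μ m) ∧ I.prefW w m (μ.symm w)

/-- A matching is stable if no pair blocks it. -/
def SMInstance.Stable {M W : Type} [Fintype M] [Fintype W]
    (I : SMInstance M W) (μ : M ≃ W) : Prop :=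
  ∀ m w, ¬ I.Blocks μ m w

namespace SMOpt

variable {M W : Type} [Fintype M] [Fintype W] [DecidableEq M] [DecidableEq W]

lemma nW (I : SMInstance M W) : Nonempty W := by
  have h1 := I.card_pos
  have h2 := I.card_eq
  exact Fintype.card_pos_iff.mp (by omega)

lemma nM (I : SMInstance M W) : Nonempty M := by
  have h1 := I.card_pos
  exact Fintype.card_pos_iff.mp (by omega)

lemma exists_best (I : SMInstance M W) (m : M) (S : Finset W) (hS : S.Nonempty) :
    ∃ b ∈ S, ∀ w ∈ S, w = b ∨ I.prefM m b w := by
  classical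
  induction S using Finset.induction_on with
  | empty => exact absurd hS (by simp)
  | @insert a s ha ih =>
    rcases s.eq_empty_or_nonempty with rfl | hs
    · exact ⟨a, by simp, by simp⟩
    · obtain ⟨b, hb, hbest⟩ := ih hs
      rcases (by have ht := (I.prefM_sto m).trichotomous a b; tauto :
          I.prefM m a b ∨ a = b ∨ I.prefM m b a) with h | h | h
      · -- prefM m a b : new best is a
        refine ⟨a, by simp, ?_⟩
        intro w hw
        rcases Finset.mem_insert.mp hw with rfl | hw
        · exact Or.inl rfl
        · rcases hbest w hw with rfl | hw'
          · exact Or.inr h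
          · exact Or.inr ((I.prefM_sto m).trans _ _ _ h hw')
      · -- a = b
        subst h
        exact ⟨a, by simp, by
          intro w hw
          rcases Finset.mem_insert.mp hw with rfl | hw
          · exact Or.inl rfl
          · exact hbest w hw⟩
      · -- prefM m b a : best stays b
        exact ⟨b, by simp [hb], by
          intro w hw
          rcases Finset.mem_insert.mp hw with rfl | hw
          · exact Or.inr h
          · exact hbest w hw⟩

noncomputable def best (I : SMInstance M W) (m : M) (S : Finset W) : W :=
  if h : S.Nonempty then (exists_best I m S h).choose else Classical.choice (nW I)

lemma best_mem (I : SMInstance M W) {m : M} {S : Finset W} (h : S.Nonempty) :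
    best I m S ∈ S := by
  rw [best, dif_pos h]
  exact (exists_best I m S h).choose_spec.1

lemma best_spec (I : SMInstance M W) (m : M) {S : Finset W} (h : S.Nonempty) :
    ∀ w ∈ S, w = best I m S ∨ I.prefM m (best I m S) w := by
  rw [best, dif_pos h]
  exact (exists_best I m S h).choose_spec.2

/-- The man `m`'s current proposal given rejection sets `R`. -/
noncomputable def propose (I : SMInstance M W) (R : M → Finset W) (m : M) : W :=
  best I m (univ \ R m)

/-- Invariant: every rejection was in favor of a better current proposer. -/
def Held (I : SMInstance M W) (R : M → Finset W) : Prop :=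
  ∀ m w, w ∈ R m → ∃ m', propose I R m' = w ∧ I.prefW w m' m

/-- Invariant: no man has been rejected by his partner in any stable matching. -/
def Opt (I : SMInstance M W) (R : M → Finset W) : Prop :=
  ∀ ν : M ≃ W, I.Stable ν → ∀ m, ν m ∉ R m

lemma nonempty_of_held {I : SMInstance M W} {R : M → Finset W} (hH : Held I R) (m : M) :
    (univ \ R m).Nonempty := by
  by_contra h
  have hall : ∀ w : W, w ∈ R m := by
    intro w
    by_contra hw
    exact h ⟨w, Finset.mem_sdiff.mpr ⟨Finset.mem_univ w, hw⟩⟩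
  set f : W → M := fun w => (hH m w (hall w)).choose with hf
  have hfp : ∀ w, propose I R (f w) = w := fun w => (hH m w (hall w)).choose_spec.1
  have hfw : ∀ w, I.prefW w (f w) m := fun w => (hH m w (hall w)).choose_spec.2
  have hinj : Function.Injective f := by
    intro a b hab
    rw [← hfp a, ← hfp b, hab]
  have hbij : Function.Bijective f :=
    (Fintype.bijective_iff_injective_and_card f).mpr ⟨hinj, I.card_eq.symm⟩
  obtain ⟨w0, hw0⟩ := hbij.2 m
  have := hfw w0
  rw [hw0] at this
  exact (I.prefW_sto w0).irrefl m this

lemma propose_mem {I : SMInstance M W} {R : M → Finset W} (hH : Held I R) (m : M) :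
    propose I R m ∈ univ \ R m :=
  best_mem I (nonempty_of_held hH m)

/-- One rejection step: woman `w = propose R m1` rejects `m1` in favor of `m2`. -/
lemma step {I : SMInstance M W} {R : M → Finset W} (hH : Held I R) (hO : Opt I R)
    (m1 m2 : M) (hne : m1 ≠ m2) (hw : propose I R m2 = propose I R m1)
    (hp : I.prefW (propose I R m1) m2 m1) :
    ∃ R' : M → Finset W, Held I R' ∧ Opt I R' ∧
      (∑ m, (univ \ R' m).card) < ∑ m, (univ \ R m).card := by
  set w := propose I R m1 with hwdef
  set R' := Function.update R m1 (insert w (R m1)) with hR'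
  have hRm : ∀ m, m ≠ m1 → R' m = R m := fun m hm => Function.update_of_ne hm _ _
  have hRm1 : R' m1 = insert w (R m1) := Function.update_self _ _ _
  have hsame : ∀ m, m ≠ m1 → propose I R' m = propose I R m := by
    intro m hm
    show best I m (univ \ R' m) = best I m (univ \ R m)
    rw [hRm m hm]
  have hw2 : propose I R' m2 = w := by rw [hsame m2 (Ne.symm hne), hw]
  have hHeld : Held I R' := by
    intro m w' hw'
    by_cases hm : m = m1
    · rw [hm, hRm1] at hw'
      rcases Finset.mem_insert.mp hw' with he | hw'
      · exact ⟨m2, by rw [hw2, he], by rw [he, hm]; exact hp⟩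
      · obtain ⟨m', hm'p, hm'w⟩ := hH m1 w' hw'
        by_cases hm'1 : m' = m1
        · have he : w' = w := by rw [← hm'p, hm'1]
          refine ⟨m2, by rw [hw2, he], ?_⟩
          rw [he, hm]
          rw [he, hm'1] at hm'w
          exact (I.prefW_sto w).trans _ _ _ hp hm'w
        · exact ⟨m', by rw [hsame m' hm'1, hm'p], by rw [hm]; exact hm'w⟩
    · rw [hRm m hm] at hw'
      obtain ⟨m', hm'p, hm'w⟩ := hH m w' hw'
      by_cases hm'1 : m' = m1
      · have he : w' = w := by rw [← hm'p, hm'1]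
        refine ⟨m2, by rw [hw2, he], ?_⟩
        rw [he]
        rw [he, hm'1] at hm'w
        exact (I.prefW_sto w).trans _ _ _ hp hm'w
      · exact ⟨m', by rw [hsame m' hm'1, hm'p], hm'w⟩
  have hOpt : Opt I R' := by
    intro ν hν m hm
    by_cases hm1 : m = m1
    · rw [hm1, hRm1] at hm
      rcases Finset.mem_insert.mp hm with hm | hm
      · -- ν m1 = w : then (m2, w) blocks ν
        have hvm2 : ν m2 ∈ univ \ R m2 :=
          Finset.mem_sdiff.mpr ⟨Finset.mem_univ _, hO ν hν m2⟩
        have hne2 : ν m2 ≠ w := by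
          intro h
          exact hne (ν.injective (hm.trans h.symm))
        have hb := best_spec I m2 (nonempty_of_held hH m2) (ν m2) hvm2
        rw [show best I m2 (univ \ R m2) = propose I R m2 from rfl, hw] at hb
        rcases hb with h | h
        · exact hne2 h
        · have hsym : ν.symm w = m1 := by
            rw [← hm]; exact ν.symm_apply_apply m1
          exact hν m2 w ⟨h, by rw [hsym]; exact hp⟩
      · exact hO ν hν m1 hm
    · rw [hRm m hm1] at hm
      exact hO ν hν m hm
  have hwmem : w ∈ univ \ R m1 := propose_mem hH m1
  refine ⟨R', hHeld, hOpt, ?_⟩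
  refine Finset.sum_lt_sum (fun m _ => ?_) ⟨m1, Finset.mem_univ m1, ?_⟩
  · by_cases hm1 : m = m1
    · subst hm1
      rw [hRm1]
      exact Finset.card_le_card (Finset.sdiff_subset_sdiff (Finset.Subset.refl _)
        (Finset.subset_insert _ _))
    · rw [hRm m hm1]
  · rw [hRm1]
    apply Finset.card_lt_card
    constructor
    · exact Finset.sdiff_subset_sdiff (Finset.Subset.refl _) (Finset.subset_insert _ _)
    · intro hsub
      have := hsub hwmem
      rw [Finset.mem_sdiff] at this
      exact this.2 (Finset.mem_insert_self _ _)

lemma gs (I : SMInstance M W) : ∀ (k : ℕ) (R : M → Finset W), Held I R → Opt I R →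
    (∑ m, (univ \ R m).card) ≤ k →
    ∃ μM : M ≃ W, I.Stable μM ∧
      ∀ μ : M ≃ W, I.Stable μ → ∀ m : M, μM m = μ m ∨ I.prefM m (μM m) (μ m) := by
  intro k
  induction k with
  | zero =>
    intro R hH _ hk
    obtain ⟨m0⟩ := nM I
    have h1 : (univ \ R m0).card ≤ 0 :=
      le_trans (Finset.single_le_sum (f := fun m => (univ \ R m).card)
        (fun _ _ => Nat.zero_le _) (Finset.mem_univ m0)) hk
    have h2 := nonempty_of_held hH m0
    rw [← Finset.card_pos] at h2
    omega
  | succ k ih =>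
    intro R hH hO hk
    by_cases hinj : Function.Injective (propose I R)
    · have hbij : Function.Bijective (propose I R) :=
        (Fintype.bijective_iff_injective_and_card _).mpr ⟨hinj, I.card_eq⟩
      set μ : M ≃ W := Equiv.ofBijective _ hbij with hμ
      have hμa : ∀ m, μ m = propose I R m := fun _ => rfl
      refine ⟨μ, ?_, ?_⟩
      · rintro m w ⟨h1, h2⟩
        have hwR : w ∈ R m := by
          by_contra hwR
          have hb := best_spec I m (nonempty_of_held hH m) w
            (Finset.mem_sdiff.mpr ⟨Finset.mem_univ _, hwR⟩)
          rw [show best I m (univ \ R m) = propose I R m from rfl, ← hμa m] at hb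
          rcases hb with h | h
          · rw [← h] at h1
            exact (I.prefM_sto m).irrefl w h1
          · exact (I.prefM_sto m).irrefl w ((I.prefM_sto m).trans _ _ _ h1 h)
        obtain ⟨m', hm'p, hm'w⟩ := hH m w hwR
        have hm' : μ.symm w = m' := by
          apply μ.injective
          rw [Equiv.apply_symm_apply, hμa m', hm'p]
        rw [hm'] at h2
        exact (I.prefW_sto w).irrefl m ((I.prefW_sto w).trans _ _ _ h2 hm'w)
      · intro ν hν m
        have hvm : ν m ∈ univ \ R m :=
          Finset.mem_sdiff.mpr ⟨Finset.mem_univ _, hO ν hν m⟩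
        have hb := best_spec I m (nonempty_of_held hH m) (ν m) hvm
        rw [show best I m (univ \ R m) = propose I R m from rfl, ← hμa m] at hb
        rcases hb with h | h
        · exact Or.inl h.symm
        · exact Or.inr h
    · rw [Function.not_injective_iff] at hinj
      obtain ⟨a, b, hab, hne⟩ := hinj
      rcases (by have ht := (I.prefW_sto (propose I R a)).trichotomous a b; tauto :
          I.prefW (propose I R a) a b ∨ a = b ∨ I.prefW (propose I R a) b a) with h | h | h
      · -- prefW w a b : b rejected in favor of a
        obtain ⟨R', hH', hO', hlt⟩ := step hH hO b a (Ne.symm hne) hab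
          (by rw [← hab]; exact h)
        exact ih R' hH' hO' (by omega)
      · exact absurd h hne
      · -- prefW w b a : a rejected in favor of b
        obtain ⟨R', hH', hO', hlt⟩ := step hH hO a b hne hab.symm h
        exact ih R' hH' hO' (by omega)

end SMOpt

/-- There exists a man-optimal stable matching. -/
theorem exists_man_optimal_stable_matching {M W : Type} [Fintype M] [Fintype W]
    (I : SMInstance M W) :
    ∃ μM : M ≃ W, I.Stable μM ∧
      ∀ μ : M ≃ W, I.Stable μ → ∀ m : M, μM m = μ m ∨ I.prefM m (μM m) (μ m) := by
  classical
  exact SMOpt.gs I (∑ m : M, (Finset.univ \ (∅ : Finset W)).card)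
    (fun _ => ∅) (fun m w hw => absurd hw (Finset.notMem_empty w))
    (fun ν _ m hm => absurd hm (Finset.notMem_empty _)) le_rfl
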